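/- (Bracketing the Lagrange multiplier in the spherical trust-region problem.) Let A be a symmetric real n×n matrix with smallest eigenvalue d₁, let V₁ be a real n×r matrix whose columns form an orthonormal basis of the eigenspace of A for the eigenvalue d₁, and let b ∈ ℝⁿ. Suppose λ < d₁ is a real number such that the vector x = (A − λ I_n)⁻¹ b satisfies ‖x‖ = 1. Then d₁ − ‖b‖ ≤ λ ≤ d₁ − ‖V₁ᵀ b‖. -/

import Mathlib

open Matrix

/-- (Bracketing the Lagrange multiplier in the spherical trust-region problem.)
Let `A` be symmetric with smallest eigenvalue `d₁` (i.e. `d₁ ‖x‖² ≤ xᵀ A x` for all `x`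
and `d₁` is attained by some eigenvector), let the columns of `V₁` form an orthonormal
basis of the eigenspace of `A` for `d₁`, and let `b ∈ ℝⁿ`. If `l < d₁` and
`x = (A − l I)⁻¹ b` satisfies `‖x‖ = 1`, then `d₁ − ‖b‖ ≤ l ≤ d₁ − ‖V₁ᵀ b‖`. -/
theorem stmt_14 {n r : ℕ}
    (A : Matrix (Fin n) (Fin n) ℝ) (hA : A.IsSymm)
    (d₁ : ℝ)
    (hmin : ∀ x : Fin n → ℝ, d₁ * (x ⬝ᵥ x) ≤ x ⬝ᵥ A.mulVec x)
    (hex : ∃ x : Fin n → ℝ, x ≠ 0 ∧ A.mulVec x = d₁ • x)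
    (V₁ : Matrix (Fin n) (Fin r) ℝ)
    (hV₁ : V₁ᵀ * V₁ = 1)
    (hV₁eig : ∀ c : Fin r → ℝ, A.mulVec (V₁.mulVec c) = d₁ • V₁.mulVec c)
    (hspan : ∀ x : Fin n → ℝ, A.mulVec x = d₁ • x → ∃ c : Fin r → ℝ, x = V₁.mulVec c)
    (b : Fin n → ℝ) (l : ℝ) (hl : l < d₁)
    (x : Fin n → ℝ)
    (hx : x = (A - l • (1 : Matrix (Fin n) (Fin n) ℝ))⁻¹.mulVec b)
    (hxnorm : x ⬝ᵥ x = 1) :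
    d₁ - Real.sqrt (b ⬝ᵥ b) ≤ l ∧
    l ≤ d₁ - Real.sqrt (V₁ᵀ.mulVec b ⬝ᵥ V₁ᵀ.mulVec b) := by
  classical
  set M : Matrix (Fin n) (Fin n) ℝ := A - l • (1 : Matrix (Fin n) (Fin n) ℝ) with hM
  have hMv : ∀ v : Fin n → ℝ, M.mulVec v = A.mulVec v - l • v := by
    intro v
    simp [hM, Matrix.sub_mulVec, Matrix.smul_mulVec, Matrix.one_mulVec]
  have hdotpos : ∀ v : Fin n → ℝ, v ≠ 0 → 0 < v ⬝ᵥ v := by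
    intro v hv
    refine lt_of_le_of_ne (Finset.sum_nonneg fun i _ => mul_self_nonneg _) ?_
    intro h
    exact hv (dotProduct_self_eq_zero.mp h.symm)
  have hMpd : M.PosDef := by
    rw [Matrix.posDef_iff_dotProduct_mulVec]
    constructor
    · have : Mᵀ = M := by
        rw [hM, Matrix.transpose_sub, Matrix.transpose_smul, Matrix.transpose_one, hA]
      simpa [Matrix.IsHermitian] using this
    · intro v hv
      have h1 : d₁ * (v ⬝ᵥ v) ≤ v ⬝ᵥ A.mulVec v := hmin v
      have h2 : 0 < v ⬝ᵥ v := hdotpos v hv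
      have : v ⬝ᵥ M.mulVec v = v ⬝ᵥ A.mulVec v - l * (v ⬝ᵥ v) := by
        rw [hMv v, dotProduct_sub, dotProduct_smul, smul_eq_mul]
      simp only [star_trivial]
      rw [this]
      nlinarith
  have hMb : M.mulVec x = b := by
    rw [hx, Matrix.mulVec_mulVec, Matrix.mul_nonsing_inv _ (Matrix.isUnit_iff_isUnit_det M |>.mp hMpd.isUnit), Matrix.one_mulVec]
  have hbx : b = A.mulVec x - l • x := by rw [← hMb, hMv]
  -- Cauchy-Schwarz
  have hCS : ∀ u v : Fin n → ℝ, (u ⬝ᵥ v) ^ 2 ≤ (u ⬝ᵥ u) * (v ⬝ᵥ v) := by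
    intro u v
    have := Finset.sum_mul_sq_le_sq_mul_sq Finset.univ u v
    simpa [dotProduct, sq, Finset.sum_mul_sq_le_sq_mul_sq, mul_pow] using
      (by simpa [sq] using this : (∑ i, u i * v i) ^ 2 ≤ (∑ i, u i * u i) * ∑ i, v i * v i)
  constructor
  · -- lower bound
    have h1 : d₁ - l ≤ x ⬝ᵥ b := by
      have : x ⬝ᵥ b = x ⬝ᵥ A.mulVec x - l := by
        rw [hbx, dotProduct_sub, dotProduct_smul, smul_eq_mul, hxnorm, mul_one]
      rw [this]
      have := hmin x
      rw [hxnorm, mul_one] at this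
      linarith
    have h2 : x ⬝ᵥ b ≤ Real.sqrt (b ⬝ᵥ b) := by
      have hcs := hCS x b
      rw [hxnorm, one_mul] at hcs
      calc x ⬝ᵥ b ≤ |x ⬝ᵥ b| := le_abs_self _
        _ = Real.sqrt ((x ⬝ᵥ b) ^ 2) := (Real.sqrt_sq_eq_abs _).symm
        _ ≤ Real.sqrt (b ⬝ᵥ b) := Real.sqrt_le_sqrt hcs
    linarith
  · -- upper bound
    set y : Fin r → ℝ := V₁ᵀ.mulVec x with hy
    have hAV : A * V₁ = d₁ • V₁ := by
      ext i j
      have := congrFun (hV₁eig (Pi.single j 1)) i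
      simpa [Matrix.mulVec_single, Matrix.mulVec, dotProduct, Matrix.mul_apply, Pi.single_apply, mul_ite, mul_one, mul_zero, Finset.sum_ite_eq'] using this
    have hVtb : V₁ᵀ.mulVec b = (d₁ - l) • y := by
      rw [hbx, Matrix.mulVec_sub, Matrix.mulVec_smul]
      have : V₁ᵀ.mulVec (A.mulVec x) = d₁ • y := by
        rw [Matrix.mulVec_mulVec]
        have : V₁ᵀ * A = d₁ • V₁ᵀ := by
          have := congrArg Matrix.transpose hAV
          rw [Matrix.transpose_mul, Matrix.transpose_smul] at this
          rwa [show Aᵀ = A from hA] at this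
        rw [this, Matrix.smul_mulVec]
      rw [this, hy, sub_smul]
    -- ‖y‖² ≤ ‖x‖² = 1
    have hproj : y ⬝ᵥ y ≤ 1 := by
      set z : Fin n → ℝ := x - V₁.mulVec y with hz
      have hz1 : x ⬝ᵥ V₁.mulVec y = y ⬝ᵥ y := by
        rw [Matrix.dotProduct_mulVec, ← Matrix.mulVec_transpose, ← hy,
          dotProduct_comm]
      have hz2 : V₁.mulVec y ⬝ᵥ V₁.mulVec y = y ⬝ᵥ y := by
        rw [Matrix.dotProduct_mulVec, ← Matrix.mulVec_transpose, Matrix.mulVec_mulVec, hV₁,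
          Matrix.one_mulVec, dotProduct_comm]
      have hz3 : 0 ≤ z ⬝ᵥ z := by
        rcases eq_or_ne z 0 with h | h
        · simp [h]
        · exact le_of_lt (hdotpos z h)
      have hz4 : z ⬝ᵥ z = 1 - y ⬝ᵥ y := by
        rw [hz, sub_dotProduct, dotProduct_sub, dotProduct_sub, hxnorm,
          hz1, hz2, dotProduct_comm (V₁.mulVec y) x, hz1]
        ring
      linarith [hz4 ▸ hz3]
    have hsq : V₁ᵀ.mulVec b ⬝ᵥ V₁ᵀ.mulVec b = (d₁ - l) ^ 2 * (y ⬝ᵥ y) := by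
      rw [hVtb, smul_dotProduct, dotProduct_smul, smul_eq_mul, smul_eq_mul]
      ring
    have hle : Real.sqrt (V₁ᵀ.mulVec b ⬝ᵥ V₁ᵀ.mulVec b) ≤ d₁ - l := by
      rw [hsq]
      calc Real.sqrt ((d₁ - l) ^ 2 * (y ⬝ᵥ y)) ≤ Real.sqrt ((d₁ - l) ^ 2 * 1) := by
            apply Real.sqrt_le_sqrt
            have : (0:ℝ) ≤ (d₁ - l) ^ 2 := sq_nonneg _
            nlinarith
        _ = d₁ - l := by
            rw [mul_one, Real.sqrt_sq (by linarith)]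
    linarith
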